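/- The map ∂_ε is a derivation of the loop algebra 𝔡[t,t⁻¹], i.e. ∂_ε([u,v]) = [∂_ε u, v] + [u, ∂_ε v] for all u,v ∈ 𝔡[t,t⁻¹]; moreover, for every ℓ ∈ ℂ it is compatible with the cocycle ω_ℓ in the sense that ω_ℓ(∂_ε u, v) + ω_ℓ(u, ∂_ε v) = 0 for all u,v, so that ∂_ε extends to a derivation of the central extension 𝔡[t,t⁻¹] ⊕ ℂc_ℓ acting by zero on c_ℓ. -/

import Mathlib

open scoped TensorProduct

noncomputable section

variable (L : Type) [LieRing L] [LieAlgebra ℂ L]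

attribute [local instance 100] LieRing.ofAssociativeRing

/-- The coadjoint action of `L` on its dual space: `(coad L x f) z = -f ⁅x, z⁆`. -/
def coad : L →ₗ[ℂ] Module.Dual ℂ L →ₗ[ℂ] Module.Dual ℂ L :=
  -(Module.Dual.transpose (R := ℂ) ∘ₗ (LieAlgebra.ad ℂ L).toLinearMap)

variable {L}

lemma coad_apply (x : L) (f : Module.Dual ℂ L) (z : L) :
    coad L x f z = -f ⁅x, z⁆ := by
  simp [coad, Module.Dual.transpose_apply]

lemma coad_lie (x y : L) :
    coad L ⁅x, y⁆ = coad L x ∘ₗ coad L y - coad L y ∘ₗ coad L x := by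
  ext f z
  simp only [coad_apply, LinearMap.sub_apply, LinearMap.comp_apply]
  rw [leibniz_lie x y z, map_add]
  ring

variable (L)

/-- The bracket of the cotangent Lie algebra `T*𝔤 = 𝔤 ⋉ 𝔤*`:
`[(x,f),(y,g)] = ([x,y], x•g − y•f)`. -/
def dbkt (a b : L × Module.Dual ℂ L) : L × Module.Dual ℂ L :=
  (⁅a.1, b.1⁆, coad L a.1 b.2 - coad L b.1 a.2)

instance cotLieRing : LieRing (L × Module.Dual ℂ L) :=
  { (inferInstance : AddCommGroup (L × Module.Dual ℂ L)) with
    bracket := dbkt L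
    add_lie := by
      intro a b c
      show dbkt L (a + b) c = dbkt L a c + dbkt L b c
      simp only [dbkt, Prod.fst_add, Prod.snd_add, Prod.mk_add_mk, add_lie, map_add,
        LinearMap.add_apply, Prod.mk.injEq]
      exact ⟨trivial, by abel⟩
    lie_add := by
      intro a b c
      show dbkt L a (b + c) = dbkt L a b + dbkt L a c
      simp only [dbkt, Prod.fst_add, Prod.snd_add, Prod.mk_add_mk, lie_add, map_add,
        LinearMap.add_apply, Prod.mk.injEq]
      exact ⟨trivial, by abel⟩
    lie_self := by
      intro a
      show dbkt L a a = 0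
      simp [dbkt, Prod.ext_iff]
    leibniz_lie := by
      intro a b c
      show dbkt L a (dbkt L b c) = dbkt L (dbkt L a b) c + dbkt L b (dbkt L a c)
      simp only [dbkt, Prod.mk_add_mk, Prod.mk.injEq, coad_lie, map_sub,
        LinearMap.sub_apply, LinearMap.comp_apply]
      exact ⟨leibniz_lie a.1 b.1 c.1, by abel⟩ }

instance cotLieAlgebra : LieAlgebra ℂ (L × Module.Dual ℂ L) :=
  { (inferInstance : Module ℂ (L × Module.Dual ℂ L)) with
    lie_smul := by
      intro t a b
      show dbkt L a (t • b) = t • dbkt L a b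
      simp only [dbkt, Prod.smul_fst, Prod.smul_snd, Prod.smul_mk, lie_smul, map_smul,
        LinearMap.smul_apply, Prod.mk.injEq, smul_sub] }

@[simp] lemma cot_bracket_def (a b : L × Module.Dual ℂ L) :
    ⁅a, b⁆ = (⁅a.1, b.1⁆, coad L a.1 b.2 - coad L b.1 a.2) := rfl

end

noncomputable section LoopModel

/-- The loop algebra `𝔡[t,t⁻¹]` of the cotangent Lie algebra `𝔡 = T*𝔤`, modelled as finitely
supported functions `ℤ → 𝔡` (the value at `n` being the coefficient of `tⁿ`). -/
abbrev LoopD (L : Type) [LieRing L] [LieAlgebra ℂ L] := ℤ →₀ (L × Module.Dual ℂ L)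

variable {L : Type} [LieRing L] [LieAlgebra ℂ L]

/-- The Lie bracket of the loop algebra: `[a⊗tⁿ, b⊗tᵐ] = [a,b]⊗tⁿ⁺ᵐ`. -/
def loopBr (u v : LoopD L) : LoopD L :=
  u.sum fun n a => v.sum fun m b => Finsupp.single (n + m) ⁅a, b⁆

/-- The canonical pairing form `κ₀` on `𝔡`: `κ₀((x,f),(y,g)) = f(y) + g(x)`. -/
def kappa0 (a b : L × Module.Dual ℂ L) : ℂ :=
  a.2 b.1 + b.2 a.1

/-- The form `κ_ℓ = κ₀ + ℓ·κ_𝔤` on `𝔡`, the Killing form of `𝔤` being extended by zero. -/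
def kappaL (ℓ : ℂ) (a b : L × Module.Dual ℂ L) : ℂ :=
  kappa0 a b + ℓ * killingForm ℂ L a.1 b.1

/-- The derivation `∂_ε` of `𝔡[t,t⁻¹]`: `∂_ε((x,f)⊗tⁿ) = n·(0,ψ(x))⊗tⁿ⁻¹`, where
`ψ(x) = κ_𝔤(x,−)`. -/
def depsLoop (u : LoopD L) : LoopD L :=
  u.sum fun n a =>
    Finsupp.single (n - 1) ((n : ℂ) • (((0 : L), killingForm ℂ L a.1) : L × Module.Dual ℂ L))

/-- The derivation `∂_t` of `𝔡[t,t⁻¹]`: `∂_t(a⊗tⁿ) = n·a⊗tⁿ⁻¹`. -/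
def dtLoop (u : LoopD L) : LoopD L :=
  u.sum fun n a => Finsupp.single (n - 1) ((n : ℂ) • a)

/-- `∂_s = ∂_t + s·∂_ε`. -/
def dsLoop (s : ℂ) (u : LoopD L) : LoopD L :=
  dtLoop u + s • depsLoop u

/-- The 2-cocycle `ω_ℓ(a⊗tⁿ, b⊗tᵐ) = n·δ_{n+m,0}·κ_ℓ(a,b)` on `𝔡[t,t⁻¹]`. -/
def omegaL (ℓ : ℂ) (u v : LoopD L) : ℂ :=
  u.sum fun n a => (n : ℂ) * kappaL ℓ a (v (-n))

/-- The bracket of the central extension `𝔡[t,t⁻¹] ⊕ ℂc_ℓ`. -/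
def extBr (ℓ : ℂ) (A B : LoopD L × ℂ) : LoopD L × ℂ :=
  (loopBr A.1 B.1, omegaL ℓ A.1 B.1)

/-- The extension of `∂_ε` to `𝔡[t,t⁻¹] ⊕ ℂc_ℓ` acting by zero on `c_ℓ`. -/
def extDeps (A : LoopD L × ℂ) : LoopD L × ℂ :=
  (depsLoop A.1, 0)

end LoopModel

section AuxLemmas

variable {L : Type} [LieRing L] [LieAlgebra ℂ L]

lemma coad_killing [FiniteDimensional ℂ L] (x y : L) :
    coad L x (killingForm ℂ L y) = killingForm ℂ L ⁅x, y⁆ := by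
  ext z
  rw [coad_apply, ← LieModule.traceForm_apply_lie_apply ℂ L L y x z]
  simp only [← lie_skew x y, map_neg, LinearMap.neg_apply, neg_neg]

lemma br1 [FiniteDimensional ℂ L] (x : L) (b : L × Module.Dual ℂ L) :
    ⁅(((0 : L), killingForm ℂ L x) : L × Module.Dual ℂ L), b⁆ =
      ((0 : L), killingForm ℂ L ⁅x, b.1⁆) := by
  simp only [cot_bracket_def]
  refine Prod.ext (by simp) ?_
  simp only [map_zero, LinearMap.zero_apply, zero_sub]
  rw [coad_killing]
  simp only [← lie_skew x b.1, map_neg, neg_neg]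

lemma br2 [FiniteDimensional ℂ L] (y : L) (a : L × Module.Dual ℂ L) :
    ⁅a, (((0 : L), killingForm ℂ L y) : L × Module.Dual ℂ L)⁆ =
      ((0 : L), killingForm ℂ L ⁅a.1, y⁆) := by
  simp only [cot_bracket_def]
  refine Prod.ext (by simp) ?_
  simp [coad_killing]

lemma depsLoop_zero : depsLoop (0 : LoopD L) = 0 := by
  simp [depsLoop]

lemma depsLoop_single (n : ℤ) (a : L × Module.Dual ℂ L) :
    depsLoop (Finsupp.single n a) =
      Finsupp.single (n - 1) ((n : ℂ) • (((0 : L), killingForm ℂ L a.1) : L × Module.Dual ℂ L)) := by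
  rw [depsLoop, Finsupp.sum_single_index]
  simp

lemma depsLoop_add (u v : LoopD L) : depsLoop (u + v) = depsLoop u + depsLoop v := by
  rw [depsLoop, depsLoop, depsLoop, Finsupp.sum_add_index]
  · intro n _; simp
  · intro n _ a a'
    rw [← Finsupp.single_add]
    congr 1
    rw [← smul_add]
    congr 1
    rw [Prod.mk_add_mk]
    simp

lemma loopBr_zero_left (v : LoopD L) : loopBr 0 v = 0 := by simp [loopBr]

lemma loopBr_zero_right (u : LoopD L) : loopBr u 0 = 0 := by simp [loopBr]

lemma loopBr_add_left (u u' v : LoopD L) :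
    loopBr (u + u') v = loopBr u v + loopBr u' v := by
  rw [loopBr, loopBr, loopBr, Finsupp.sum_add_index]
  · intro n _; simp [Finsupp.sum]
  · intro n _ a a'
    rw [← Finsupp.sum_add]
    exact Finsupp.sum_congr fun m _ => by rw [add_lie, Finsupp.single_add]

lemma loopBr_add_right (u v v' : LoopD L) :
    loopBr u (v + v') = loopBr u v + loopBr u v' := by
  rw [loopBr, loopBr, loopBr, ← Finsupp.sum_add]
  refine Finsupp.sum_congr fun n _ => ?_
  rw [Finsupp.sum_add_index]
  · intro m _; simp
  · intro m _ b b'; rw [lie_add, Finsupp.single_add]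

lemma loopBr_single_single (n m : ℤ) (a b : L × Module.Dual ℂ L) :
    loopBr (Finsupp.single n a) (Finsupp.single m b) =
      Finsupp.single (n + m) ⁅a, b⁆ := by
  rw [loopBr, Finsupp.sum_single_index, Finsupp.sum_single_index]
  · simp
  · simp [Finsupp.sum]

lemma kappaL_zero_left (ℓ : ℂ) (b : L × Module.Dual ℂ L) : kappaL ℓ (0 : L × Module.Dual ℂ L) b = 0 := by
  simp [kappaL, kappa0]

lemma kappaL_zero_right (ℓ : ℂ) (a : L × Module.Dual ℂ L) : kappaL ℓ a (0 : L × Module.Dual ℂ L) = 0 := by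
  simp [kappaL, kappa0]

lemma kappaL_add_right (ℓ : ℂ) (a b b' : L × Module.Dual ℂ L) :
    kappaL ℓ a (b + b') = kappaL ℓ a b + kappaL ℓ a b' := by
  simp [kappaL, kappa0]; ring

lemma omegaL_zero_left (ℓ : ℂ) (v : LoopD L) : omegaL ℓ (0 : LoopD L) v = 0 := by
  simp [omegaL]

lemma omegaL_zero_right (ℓ : ℂ) (u : LoopD L) : omegaL ℓ u (0 : LoopD L) = 0 := by
  simp [omegaL, kappaL_zero_right]

lemma omegaL_add_left (ℓ : ℂ) (u u' v : LoopD L) :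
    omegaL ℓ (u + u') v = omegaL ℓ u v + omegaL ℓ u' v := by
  rw [omegaL, omegaL, omegaL, Finsupp.sum_add_index]
  · intro n _; simp [kappaL_zero_left]
  · intro n _ a a'
    simp only [kappaL, kappa0, Prod.fst_add, Prod.snd_add, LinearMap.add_apply, map_add]
    ring

lemma omegaL_add_right (ℓ : ℂ) (u v v' : LoopD L) :
    omegaL ℓ u (v + v') = omegaL ℓ u v + omegaL ℓ u v' := by
  rw [omegaL, omegaL, omegaL, ← Finsupp.sum_add]
  refine Finsupp.sum_congr fun n _ => ?_
  rw [Finsupp.add_apply, kappaL_add_right]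
  ring

lemma omegaL_single_left (ℓ : ℂ) (n : ℤ) (a : L × Module.Dual ℂ L) (v : LoopD L) :
    omegaL ℓ (Finsupp.single n a) v = (n : ℂ) * kappaL ℓ a (v (-n)) := by
  rw [omegaL, Finsupp.sum_single_index]
  simp [kappaL_zero_left]

end AuxLemmas

section MoreAux

variable {L : Type} [LieRing L] [LieAlgebra ℂ L]

lemma kappaL_special_left (ℓ : ℂ) (x : L) (b : L × Module.Dual ℂ L) :
    kappaL ℓ (((0 : L), killingForm ℂ L x) : L × Module.Dual ℂ L) b
      = killingForm ℂ L x b.1 := by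
  simp [kappaL, kappa0]

lemma kappaL_special_right (ℓ : ℂ) (a : L × Module.Dual ℂ L) (y : L) :
    kappaL ℓ a (((0 : L), killingForm ℂ L y) : L × Module.Dual ℂ L)
      = killingForm ℂ L y a.1 := by
  simp [kappaL, kappa0]

lemma kappaL_smul_left (ℓ c : ℂ) (a b : L × Module.Dual ℂ L) :
    kappaL ℓ (c • a) b = c * kappaL ℓ a b := by
  simp [kappaL, kappa0]; ring

lemma kappaL_smul_right (ℓ c : ℂ) (a b : L × Module.Dual ℂ L) :
    kappaL ℓ a (c • b) = c * kappaL ℓ a b := by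
  simp [kappaL, kappa0]; ring

variable [FiniteDimensional ℂ L]

lemma depsDeriv_ss (n m : ℤ) (a b : L × Module.Dual ℂ L) :
    depsLoop (loopBr (Finsupp.single n a) (Finsupp.single m b)) =
      loopBr (depsLoop (Finsupp.single n a)) (Finsupp.single m b)
        + loopBr (Finsupp.single n a) (depsLoop (Finsupp.single m b)) := by
  rw [loopBr_single_single, depsLoop_single, depsLoop_single, depsLoop_single,
    loopBr_single_single, loopBr_single_single, smul_lie, lie_smul, br1, br2]
  simp only [cot_bracket_def]
  rw [show n - 1 + m = n + m - 1 from by ring, show n + (m - 1) = n + m - 1 from by ring,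
    ← Finsupp.single_add, ← add_smul]
  congr 1
  push_cast
  ring

lemma depsDeriv_single (n : ℤ) (a : L × Module.Dual ℂ L) (v : LoopD L) :
    depsLoop (loopBr (Finsupp.single n a) v) =
      loopBr (depsLoop (Finsupp.single n a)) v
        + loopBr (Finsupp.single n a) (depsLoop v) := by
  induction v using Finsupp.induction with
  | zero => simp [loopBr_zero_right, depsLoop_zero]
  | single_add m b v' _ _ ih =>
    rw [loopBr_add_right, depsLoop_add, depsLoop_add, loopBr_add_right, loopBr_add_right,
      ih, depsDeriv_ss]
    abel

lemma cocycle_ss (ℓ : ℂ) (n m : ℤ) (a b : L × Module.Dual ℂ L) :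
    omegaL ℓ (depsLoop (Finsupp.single n a)) (Finsupp.single m b)
      + omegaL ℓ (Finsupp.single n a) (depsLoop (Finsupp.single m b)) = 0 := by
  rw [depsLoop_single, depsLoop_single, omegaL_single_left, omegaL_single_left]
  by_cases h : m = 1 - n
  · subst h
    rw [show -(n - 1) = 1 - n from by ring, show (1 - n - 1 : ℤ) = -n from by ring,
      Finsupp.single_eq_same, Finsupp.single_eq_same,
      kappaL_smul_left, kappaL_smul_right, kappaL_special_left, kappaL_special_right,
      LieModule.traceForm_comm ℂ L L b.1 a.1]
    push_cast
    ring
  · rw [Finsupp.single_eq_of_ne (by omega), Finsupp.single_eq_of_ne (by omega),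
      kappaL_zero_right, kappaL_zero_right]
    ring

lemma cocycle_single (ℓ : ℂ) (n : ℤ) (a : L × Module.Dual ℂ L) (v : LoopD L) :
    omegaL ℓ (depsLoop (Finsupp.single n a)) v
      + omegaL ℓ (Finsupp.single n a) (depsLoop v) = 0 := by
  induction v using Finsupp.induction with
  | zero => simp [depsLoop_zero, omegaL_zero_left, omegaL_zero_right]
  | single_add m b v' _ _ ih =>
    rw [depsLoop_add, omegaL_add_right, omegaL_add_right]
    linear_combination cocycle_ss ℓ n m a b + ih

end MoreAux

/-- `∂_ε` is a derivation of the loop algebra `𝔡[t,t⁻¹]`; moreover, for every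
`ℓ ∈ ℂ` it is compatible with the cocycle `ω_ℓ`, so that it extends to a derivation of the
central extension `𝔡[t,t⁻¹] ⊕ ℂc_ℓ` acting by zero on `c_ℓ`. -/
theorem deps_is_derivation (L : Type) [LieRing L] [LieAlgebra ℂ L] [FiniteDimensional ℂ L]
    (ℓ : ℂ) :
    (∀ u v : LoopD L, depsLoop (loopBr u v) = loopBr (depsLoop u) v + loopBr u (depsLoop v)) ∧
    (∀ u v : LoopD L, omegaL ℓ (depsLoop u) v + omegaL ℓ u (depsLoop v) = 0) ∧
    (∀ A B : LoopD L × ℂ,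
      extDeps (extBr ℓ A B) = extBr ℓ (extDeps A) B + extBr ℓ A (extDeps B)) := by
  have H1 : ∀ u v : LoopD L,
      depsLoop (loopBr u v) = loopBr (depsLoop u) v + loopBr u (depsLoop v) := by
    intro u v
    induction u using Finsupp.induction with
    | zero => simp [loopBr_zero_left, depsLoop_zero]
    | single_add n a u' _ _ ih =>
      rw [loopBr_add_left, depsLoop_add, depsLoop_add, loopBr_add_left, loopBr_add_left,
        ih, depsDeriv_single]
      abel
  have H2 : ∀ u v : LoopD L,
      omegaL ℓ (depsLoop u) v + omegaL ℓ u (depsLoop v) = 0 := by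
    intro u v
    induction u using Finsupp.induction with
    | zero => simp [depsLoop_zero, omegaL_zero_left]
    | single_add n a u' _ _ ih =>
      rw [depsLoop_add, omegaL_add_left, omegaL_add_left]
      linear_combination cocycle_single ℓ n a v + ih
  refine ⟨H1, H2, ?_⟩
  intro A B
  have h2 := H2 A.1 B.1
  simp only [extDeps, extBr, Prod.mk_add_mk, Prod.mk.injEq]
  exact ⟨H1 A.1 B.1, by linear_combination -h2⟩
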